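/- Let M be a symmetric positive definite n×n real matrix, let D be an n×n diagonal matrix with strictly positive diagonal entries, let α > 0, and let Θ_w and Θ_v be n×n diagonal matrices with strictly positive diagonal entries. Then every eigenvalue λ of the 2n×2n matrix [[α D + Θ_w, −α D], [−α D, α D + Θ_v]]⁻¹ [[α M + Θ_w, −α M], [−α M, α M + Θ_v]] is real and satisfies min{λmin(D⁻¹M), 1} ≤ λ ≤ max{λmax(D⁻¹M), 1}. -/

import Mathlib

open Matrix

/-- The set of Rayleigh quotients `(vᵀ P v)/(vᵀ Q v)` over nonzero real vectors `v`.
For `P = M` symmetric positive definite and `Q = D` diagonal positive definite,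
`sInf` (resp. `sSup`) of this set is `λmin(D⁻¹M)` (resp. `λmax(D⁻¹M)`). -/
def rayleighSet {n : ℕ} (P Q : Matrix (Fin n) (Fin n) ℝ) : Set ℝ :=
  {r | ∃ v : Fin n → ℝ, v ≠ 0 ∧ r = (v ⬝ᵥ (P *ᵥ v)) / (v ⬝ᵥ (Q *ᵥ v))}

section Aux

lemma dot_symm' {ι : Type*} [Fintype ι] (S : Matrix ι ι ℝ) (hS : Sᵀ = S) (x y : ι → ℝ) :
    x ⬝ᵥ (S *ᵥ y) = y ⬝ᵥ (S *ᵥ x) := by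
  rw [dotProduct_mulVec, ← hS, vecMul_transpose, dotProduct_comm, hS]

variable {n : ℕ}

lemma diag_quad (e : Fin n → ℝ) (z : Fin n → ℝ) :
    z ⬝ᵥ (Matrix.diagonal e *ᵥ z) = ∑ i, e i * z i ^ 2 := by
  simp only [dotProduct, mulVec_diagonal]
  exact Finset.sum_congr rfl fun i _ => by ring

lemma diag_quad_nonneg {e : Fin n → ℝ} (he : ∀ i, 0 < e i) (z : Fin n → ℝ) :
    0 ≤ z ⬝ᵥ (Matrix.diagonal e *ᵥ z) := by
  rw [diag_quad]
  exact Finset.sum_nonneg fun i _ => mul_nonneg (he i).le (sq_nonneg _)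

lemma diag_quad_pos {e : Fin n → ℝ} (he : ∀ i, 0 < e i) {z : Fin n → ℝ} (hz : z ≠ 0) :
    0 < z ⬝ᵥ (Matrix.diagonal e *ᵥ z) := by
  rw [diag_quad]
  obtain ⟨i, hi⟩ := Function.ne_iff.mp hz
  refine Finset.sum_pos' (fun i _ => mul_nonneg (he i).le (sq_nonneg _)) ⟨i, Finset.mem_univ i, ?_⟩
  exact mul_pos (he i) (by simpa [sq_abs] using pow_pos (abs_pos.mpr hi) 2)

lemma posdef_quad_pos {S : Matrix (Fin n) (Fin n) ℝ} (hS : S.PosDef) {z : Fin n → ℝ}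
    (hz : z ≠ 0) : 0 < z ⬝ᵥ (S *ᵥ z) := by
  have := hS.dotProduct_mulVec_pos hz
  simpa using this

lemma quad_decomp (S : Matrix (Fin n) (Fin n) ℝ) (hS : Sᵀ = S) (α : ℝ)
    (dw dv : Fin n → ℝ) (x y : Fin n → ℝ) :
    (Sum.elim x y) ⬝ᵥ ((Matrix.fromBlocks (α • S + Matrix.diagonal dw) (-(α • S)) (-(α • S))
        (α • S + Matrix.diagonal dv)) *ᵥ Sum.elim x y)
      = α * ((x - y) ⬝ᵥ (S *ᵥ (x - y)))
        + x ⬝ᵥ (Matrix.diagonal dw *ᵥ x) + y ⬝ᵥ (Matrix.diagonal dv *ᵥ y) := by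
  rw [fromBlocks_mulVec, sumElim_dotProduct_sumElim]
  simp only [add_mulVec, neg_mulVec, smul_mulVec, mulVec_sub, dotProduct_add,
    dotProduct_neg, dotProduct_smul, dotProduct_sub, sub_dotProduct, smul_eq_mul,
    Sum.elim_comp_inl, Sum.elim_comp_inr]
  rw [dot_symm' S hS y x]
  ring

lemma rayleigh_bddBelow' (M : Matrix (Fin n) (Fin n) ℝ) (hM : M.PosDef)
    (d : Fin n → ℝ) (hd : ∀ i, 0 < d i) : BddBelow (rayleighSet M (Matrix.diagonal d)) := by
  refine ⟨0, fun r hr => ?_⟩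
  obtain ⟨z, hz, rfl⟩ := hr
  exact le_of_lt (div_pos (posdef_quad_pos hM hz) (diag_quad_pos hd hz))

lemma rayleigh_bddAbove (M : Matrix (Fin n) (Fin n) ℝ)
    (d : Fin n → ℝ) (hd : ∀ i, 0 < d i) [Nonempty (Fin n)] :
    BddAbove (rayleighSet M (Matrix.diagonal d)) := by
  set md : ℝ := Finset.univ.inf' Finset.univ_nonempty d with hmd_def
  have hmd : 0 < md := by
    rw [hmd_def, Finset.lt_inf'_iff]
    exact fun i _ => hd i
  set mM : ℝ := Finset.univ.sup' Finset.univ_nonempty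
      (fun p : Fin n × Fin n => |M p.1 p.2|) with hmM_def
  have hmM : 0 ≤ mM := by
    obtain ⟨p⟩ : Nonempty (Fin n × Fin n) := inferInstance
    exact le_trans (abs_nonneg (M p.1 p.2))
      (Finset.le_sup' (fun p : Fin n × Fin n => |M p.1 p.2|) (Finset.mem_univ p))
  have hmMe : ∀ i j, |M i j| ≤ mM := fun i j =>
    Finset.le_sup' (fun p : Fin n × Fin n => |M p.1 p.2|) (Finset.mem_univ (i, j))
  refine ⟨mM * n / md, fun r hr => ?_⟩
  obtain ⟨z, hz, rfl⟩ := hr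
  have hzD : 0 < z ⬝ᵥ (Matrix.diagonal d *ᵥ z) := diag_quad_pos hd hz
  rw [div_le_iff₀ hzD]
  have h1 : z ⬝ᵥ (M *ᵥ z) ≤ mM * (∑ i, |z i|) ^ 2 := by
    have : z ⬝ᵥ (M *ᵥ z) ≤ ∑ i, |z i| * (mM * ∑ j, |z j|) := by
      refine le_trans (Finset.sum_le_sum fun i _ => ?_) le_rfl
      calc z i * (M *ᵥ z) i ≤ |z i * (M *ᵥ z) i| := le_abs_self _
        _ = |z i| * |(M *ᵥ z) i| := abs_mul _ _
        _ ≤ |z i| * (mM * ∑ j, |z j|) := by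
            refine mul_le_mul_of_nonneg_left ?_ (abs_nonneg _)
            calc |(M *ᵥ z) i| ≤ ∑ j, |M i j * z j| := by
                  simpa [Matrix.mulVec, dotProduct] using
                    Finset.abs_sum_le_sum_abs (fun j => M i j * z j) Finset.univ
              _ ≤ ∑ j, mM * |z j| := by
                  refine Finset.sum_le_sum fun j _ => ?_
                  rw [abs_mul]
                  exact mul_le_mul_of_nonneg_right (hmMe i j) (abs_nonneg _)
              _ = mM * ∑ j, |z j| := by rw [Finset.mul_sum]
    calc z ⬝ᵥ (M *ᵥ z) ≤ ∑ i, |z i| * (mM * ∑ j, |z j|) := this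
      _ = mM * (∑ i, |z i|) ^ 2 := by rw [← Finset.sum_mul]; ring
  have h2 : (∑ i, |z i|) ^ 2 ≤ n * ∑ i, z i ^ 2 := by
    have := sq_sum_le_card_mul_sum_sq (s := Finset.univ) (f := fun i => |z i|)
    simpa [sq_abs] using this
  have h3 : md * ∑ i, z i ^ 2 ≤ z ⬝ᵥ (Matrix.diagonal d *ᵥ z) := by
    rw [diag_quad, Finset.mul_sum]
    refine Finset.sum_le_sum fun i _ => ?_
    exact mul_le_mul_of_nonneg_right (Finset.inf'_le d (Finset.mem_univ i)) (sq_nonneg _)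
  have hK : 0 ≤ mM * n / md := by positivity
  calc z ⬝ᵥ (M *ᵥ z) ≤ mM * (∑ i, |z i|) ^ 2 := h1
    _ ≤ mM * (n * ∑ i, z i ^ 2) := mul_le_mul_of_nonneg_left h2 hmM
    _ = (mM * n / md) * (md * ∑ i, z i ^ 2) := by field_simp
    _ ≤ (mM * n / md) * (z ⬝ᵥ (Matrix.diagonal d *ᵥ z)) := mul_le_mul_of_nonneg_left h3 hK

lemma quad_low (M : Matrix (Fin n) (Fin n) ℝ) (hM : M.PosDef)
    (d : Fin n → ℝ) (hd : ∀ i, 0 < d i) (z : Fin n → ℝ) :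
    min (sInf (rayleighSet M (Matrix.diagonal d))) 1 * (z ⬝ᵥ (Matrix.diagonal d *ᵥ z))
      ≤ z ⬝ᵥ (M *ᵥ z) := by
  rcases eq_or_ne z 0 with rfl | hz
  · simp
  · have hzD := diag_quad_pos hd hz
    have hmem : (z ⬝ᵥ (M *ᵥ z)) / (z ⬝ᵥ (Matrix.diagonal d *ᵥ z))
        ∈ rayleighSet M (Matrix.diagonal d) := ⟨z, hz, rfl⟩
    have h1 : min (sInf (rayleighSet M (Matrix.diagonal d))) 1
        ≤ (z ⬝ᵥ (M *ᵥ z)) / (z ⬝ᵥ (Matrix.diagonal d *ᵥ z)) :=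
      le_trans (min_le_left _ _) (csInf_le (rayleigh_bddBelow' M hM d hd) hmem)
    calc min (sInf (rayleighSet M (Matrix.diagonal d))) 1 * (z ⬝ᵥ (Matrix.diagonal d *ᵥ z))
        ≤ ((z ⬝ᵥ (M *ᵥ z)) / (z ⬝ᵥ (Matrix.diagonal d *ᵥ z))) * (z ⬝ᵥ (Matrix.diagonal d *ᵥ z)) :=
          mul_le_mul_of_nonneg_right h1 hzD.le
      _ = z ⬝ᵥ (M *ᵥ z) := div_mul_cancel₀ _ hzD.ne'

lemma quad_up (M : Matrix (Fin n) (Fin n) ℝ) (hM : M.PosDef)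
    (d : Fin n → ℝ) (hd : ∀ i, 0 < d i) (z : Fin n → ℝ) :
    z ⬝ᵥ (M *ᵥ z)
      ≤ max (sSup (rayleighSet M (Matrix.diagonal d))) 1 * (z ⬝ᵥ (Matrix.diagonal d *ᵥ z)) := by
  rcases eq_or_ne z 0 with rfl | hz
  · simp
  · obtain ⟨i, hi⟩ := Function.ne_iff.mp hz
    haveI : Nonempty (Fin n) := ⟨i⟩
    have hzD := diag_quad_pos hd hz
    have hmem : (z ⬝ᵥ (M *ᵥ z)) / (z ⬝ᵥ (Matrix.diagonal d *ᵥ z))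
        ∈ rayleighSet M (Matrix.diagonal d) := ⟨z, hz, rfl⟩
    have h1 : (z ⬝ᵥ (M *ᵥ z)) / (z ⬝ᵥ (Matrix.diagonal d *ᵥ z))
        ≤ max (sSup (rayleighSet M (Matrix.diagonal d))) 1 :=
      le_trans (le_csSup (rayleigh_bddAbove M d hd) hmem) (le_max_left _ _)
    calc z ⬝ᵥ (M *ᵥ z)
        = ((z ⬝ᵥ (M *ᵥ z)) / (z ⬝ᵥ (Matrix.diagonal d *ᵥ z))) * (z ⬝ᵥ (Matrix.diagonal d *ᵥ z)) :=
          (div_mul_cancel₀ _ hzD.ne').symm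
      _ ≤ max (sSup (rayleighSet M (Matrix.diagonal d))) 1 * (z ⬝ᵥ (Matrix.diagonal d *ᵥ z)) :=
          mul_le_mul_of_nonneg_right h1 hzD.le

lemma coe_dot_map {ι : Type*} [Fintype ι] (S : Matrix ι ι ℝ) (w u : ι → ℝ) :
    (fun i => ((w i : ℂ))) ⬝ᵥ (S.map Complex.ofReal *ᵥ fun i => ((u i : ℂ)))
      = ((w ⬝ᵥ (S *ᵥ u) : ℝ) : ℂ) := by
  calc (fun i => ((w i:ℂ))) ⬝ᵥ (S.map Complex.ofReal *ᵥ fun i => ((u i:ℂ)))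
      = (Complex.ofRealHom ∘ w) ⬝ᵥ (S.map Complex.ofRealHom *ᵥ (Complex.ofRealHom ∘ u)) := rfl
    _ = (Complex.ofRealHom ∘ w) ⬝ᵥ (Complex.ofRealHom ∘ (S *ᵥ u)) :=
        congrArg (dotProduct _) (funext fun i => (RingHom.map_mulVec Complex.ofRealHom S u i).symm)
    _ = ((w ⬝ᵥ (S *ᵥ u) : ℝ) : ℂ) := (RingHom.map_dotProduct Complex.ofRealHom _ _).symm

lemma star_dot_map {ι : Type*} [Fintype ι] (S : Matrix ι ι ℝ) (hS : Sᵀ = S) (v : ι → ℂ) :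
    star v ⬝ᵥ (S.map Complex.ofReal *ᵥ v)
      = (((fun i => (v i).re) ⬝ᵥ (S *ᵥ fun i => (v i).re)
          + (fun i => (v i).im) ⬝ᵥ (S *ᵥ fun i => (v i).im) : ℝ) : ℂ) := by
  set x : ι → ℝ := fun i => (v i).re with hx
  set y : ι → ℝ := fun i => (v i).im with hy
  set cx : ι → ℂ := fun i => ((x i : ℂ)) with hcx
  set cy : ι → ℂ := fun i => ((y i : ℂ)) with hcy
  have hvx : v = cx + Complex.I • cy := by
    funext i
    simp [hcx, hcy, hx, hy, Complex.ext_iff]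
  have hstar : star v = cx - Complex.I • cy := by
    rw [hvx]
    funext i
    simp [hcx, hcy, Complex.ext_iff]
  rw [hstar, hvx]
  simp only [mulVec_add, mulVec_smul, dotProduct_add, sub_dotProduct, dotProduct_smul,
    smul_dotProduct]
  rw [coe_dot_map, coe_dot_map, coe_dot_map, coe_dot_map, dot_symm' S hS y x]
  push_cast
  simp only [smul_eq_mul]
  ring_nf
  rw [Complex.I_sq]
  ring

end Aux

/-- Every eigenvalue `μ` of
`[[αD + Θ_w, -αD], [-αD, αD + Θ_v]]⁻¹ [[αM + Θ_w, -αM], [-αM, αM + Θ_v]]`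
is real and lies in `[min{λmin(D⁻¹M), 1}, max{λmax(D⁻¹M), 1}]`. -/
theorem eig_bound_block_diag_precond {n : ℕ}
    (M : Matrix (Fin n) (Fin n) ℝ) (hM : M.PosDef)
    (d : Fin n → ℝ) (hd : ∀ i, 0 < d i)
    (α : ℝ) (hα : 0 < α)
    (dw dv : Fin n → ℝ) (hdw : ∀ i, 0 < dw i) (hdv : ∀ i, 0 < dv i)
    (μ : ℂ) (v : (Fin n ⊕ Fin n) → ℂ) (hv : v ≠ 0)
    (heig : (((Matrix.fromBlocks (α • Matrix.diagonal d + Matrix.diagonal dw)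
          (-(α • Matrix.diagonal d)) (-(α • Matrix.diagonal d))
          (α • Matrix.diagonal d + Matrix.diagonal dv))⁻¹ *
        (Matrix.fromBlocks (α • M + Matrix.diagonal dw) (-(α • M)) (-(α • M))
          (α • M + Matrix.diagonal dv))).map Complex.ofReal) *ᵥ v = μ • v) :
    μ.im = 0 ∧
      min (sInf (rayleighSet M (Matrix.diagonal d))) 1 ≤ μ.re ∧
      μ.re ≤ max (sSup (rayleighSet M (Matrix.diagonal d))) 1 := by
  set A : Matrix (Fin n ⊕ Fin n) (Fin n ⊕ Fin n) ℝ :=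
    Matrix.fromBlocks (α • Matrix.diagonal d + Matrix.diagonal dw)
      (-(α • Matrix.diagonal d)) (-(α • Matrix.diagonal d))
      (α • Matrix.diagonal d + Matrix.diagonal dv) with hA_def
  set B : Matrix (Fin n ⊕ Fin n) (Fin n ⊕ Fin n) ℝ :=
    Matrix.fromBlocks (α • M + Matrix.diagonal dw) (-(α • M)) (-(α • M))
      (α • M + Matrix.diagonal dv) with hB_def
  have hMsym : Mᵀ = M := by
    rw [← Matrix.conjTranspose_eq_transpose_of_trivial]; exact hM.1
  have hDsym : (Matrix.diagonal d)ᵀ = Matrix.diagonal d := Matrix.diagonal_transpose d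
  have hAsym : Aᵀ = A := by
    simp [hA_def, fromBlocks_transpose, transpose_add, transpose_smul, transpose_neg,
      Matrix.diagonal_transpose]
  have hBsym : Bᵀ = B := by
    simp [hB_def, fromBlocks_transpose, transpose_add, transpose_smul, transpose_neg,
      Matrix.diagonal_transpose, hMsym]
  -- quadratic form positivity of A
  have hApos : ∀ u : (Fin n ⊕ Fin n) → ℝ, u ≠ 0 → 0 < u ⬝ᵥ (A *ᵥ u) := by
    intro u hu
    rw [← Sum.elim_comp_inl_inr u, hA_def, quad_decomp (Matrix.diagonal d) hDsym α dw dv]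
    have hzD : 0 ≤ (u ∘ Sum.inl - u ∘ Sum.inr) ⬝ᵥ
        (Matrix.diagonal d *ᵥ (u ∘ Sum.inl - u ∘ Sum.inr)) := diag_quad_nonneg hd _
    have hxy : u ∘ Sum.inl ≠ 0 ∨ u ∘ Sum.inr ≠ 0 := by
      by_contra h
      push_neg at h
      apply hu
      rw [← Sum.elim_comp_inl_inr u, h.1, h.2]
      funext i; cases i <;> rfl
    rcases hxy with hx | hy
    · have h1 := diag_quad_pos hdw hx
      have h2 := diag_quad_nonneg hdv (u ∘ Sum.inr)
      nlinarith
    · have h1 := diag_quad_nonneg hdw (u ∘ Sum.inl)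
      have h2 := diag_quad_pos hdv hy
      nlinarith
  have hAnn : ∀ u : (Fin n ⊕ Fin n) → ℝ, 0 ≤ u ⬝ᵥ (A *ᵥ u) := by
    intro u
    rcases eq_or_ne u 0 with rfl | hu
    · simp
    · exact (hApos u hu).le
  have hApd : A.PosDef := by
    refine Matrix.PosDef.of_dotProduct_mulVec_pos ?_ ?_
    · rw [Matrix.IsHermitian, Matrix.conjTranspose_eq_transpose_of_trivial]
      exact hAsym
    · intro u hu
      simpa using hApos u hu
  have hAdet : IsUnit A.det := hApd.det_pos.ne'.isUnit
  -- from the eigen equation, B v = μ A v (over ℂ)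
  have hmul : B.map Complex.ofReal *ᵥ v = μ • (A.map Complex.ofReal *ᵥ v) := by
    have h0 := congrArg (fun w => (A.map Complex.ofReal) *ᵥ w) heig
    have hmm : ∀ (P Q : Matrix (Fin n ⊕ Fin n) (Fin n ⊕ Fin n) ℝ),
        (P * Q).map Complex.ofReal = P.map Complex.ofReal * Q.map Complex.ofReal :=
      fun P Q => Matrix.map_mul (f := Complex.ofRealHom)
    simp only [mulVec_mulVec, mulVec_smul] at h0
    rw [hmm, ← mul_assoc, ← hmm, Matrix.mul_nonsing_inv A hAdet,
      Matrix.map_one Complex.ofReal Complex.ofReal_zero Complex.ofReal_one, one_mul] at h0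
    exact h0
  -- take star v dot product
  have hq : ((fun i => (v i).re) ⬝ᵥ (B *ᵥ fun i => (v i).re)
        + (fun i => (v i).im) ⬝ᵥ (B *ᵥ fun i => (v i).im) : ℝ)
      = μ * ((fun i => (v i).re) ⬝ᵥ (A *ᵥ fun i => (v i).re)
        + (fun i => (v i).im) ⬝ᵥ (A *ᵥ fun i => (v i).im) : ℝ) := by
    have h1 := congrArg (fun w => star v ⬝ᵥ w) hmul
    simp only [dotProduct_smul, smul_eq_mul] at h1
    rw [star_dot_map B hBsym v, star_dot_map A hAsym v] at h1
    exact h1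
  set x : (Fin n ⊕ Fin n) → ℝ := fun i => (v i).re with hx_def
  set y : (Fin n ⊕ Fin n) → ℝ := fun i => (v i).im with hy_def
  set aq : ℝ := x ⬝ᵥ (A *ᵥ x) + y ⬝ᵥ (A *ᵥ y) with haq_def
  set bq : ℝ := x ⬝ᵥ (B *ᵥ x) + y ⬝ᵥ (B *ᵥ y) with hbq_def
  have hxy : x ≠ 0 ∨ y ≠ 0 := by
    by_contra h
    push_neg at h
    apply hv
    funext i
    have h1 : x i = 0 := by rw [h.1]; rfl
    have h2 : y i = 0 := by rw [h.2]; rfl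
    exact Complex.ext h1 h2
  have haq : 0 < aq := by
    rcases hxy with hx | hy
    · have := hApos x hx; have := hAnn y; rw [haq_def]; linarith
    · have := hAnn x; have := hApos y hy; rw [haq_def]; linarith
  have hμ : μ = ((bq / aq : ℝ) : ℂ) := by
    have haq' : ((aq : ℝ) : ℂ) ≠ 0 := by
      exact_mod_cast haq.ne'
    rw [Complex.ofReal_div, eq_div_iff haq']
    exact hq.symm
  -- quadratic form comparison
  set c : ℝ := min (sInf (rayleighSet M (Matrix.diagonal d))) 1 with hc_def
  set C : ℝ := max (sSup (rayleighSet M (Matrix.diagonal d))) 1 with hC_def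
  have key_low : ∀ u : (Fin n ⊕ Fin n) → ℝ, c * (u ⬝ᵥ (A *ᵥ u)) ≤ u ⬝ᵥ (B *ᵥ u) := by
    intro u
    rw [← Sum.elim_comp_inl_inr u, hA_def, hB_def, quad_decomp (Matrix.diagonal d) hDsym α dw dv,
      quad_decomp M hMsym α dw dv]
    set z := u ∘ Sum.inl - u ∘ Sum.inr
    have h1 : c * (z ⬝ᵥ (Matrix.diagonal d *ᵥ z)) ≤ z ⬝ᵥ (M *ᵥ z) := quad_low M hM d hd z
    have hc1 : c ≤ 1 := min_le_right _ _
    have hw1 := diag_quad_nonneg hdw (u ∘ Sum.inl)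
    have hw2 := diag_quad_nonneg hdv (u ∘ Sum.inr)
    have e1 : α * (c * (z ⬝ᵥ (Matrix.diagonal d *ᵥ z))) ≤ α * (z ⬝ᵥ (M *ᵥ z)) :=
      mul_le_mul_of_nonneg_left h1 hα.le
    nlinarith
  have key_up : ∀ u : (Fin n ⊕ Fin n) → ℝ, u ⬝ᵥ (B *ᵥ u) ≤ C * (u ⬝ᵥ (A *ᵥ u)) := by
    intro u
    rw [← Sum.elim_comp_inl_inr u, hA_def, hB_def, quad_decomp (Matrix.diagonal d) hDsym α dw dv,
      quad_decomp M hMsym α dw dv]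
    set z := u ∘ Sum.inl - u ∘ Sum.inr
    have h1 : z ⬝ᵥ (M *ᵥ z) ≤ C * (z ⬝ᵥ (Matrix.diagonal d *ᵥ z)) := quad_up M hM d hd z
    have hc1 : 1 ≤ C := le_max_right _ _
    have hw1 := diag_quad_nonneg hdw (u ∘ Sum.inl)
    have hw2 := diag_quad_nonneg hdv (u ∘ Sum.inr)
    have e1 : α * (z ⬝ᵥ (M *ᵥ z)) ≤ α * (C * (z ⬝ᵥ (Matrix.diagonal d *ᵥ z))) :=
      mul_le_mul_of_nonneg_left h1 hα.le
    nlinarith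
  have hlow : c * aq ≤ bq := by
    have := key_low x
    have := key_low y
    rw [haq_def, hbq_def]; ring_nf; nlinarith
  have hup : bq ≤ C * aq := by
    have := key_up x
    have := key_up y
    rw [haq_def, hbq_def]; ring_nf; nlinarith
  refine ⟨?_, ?_, ?_⟩
  · rw [hμ]; exact Complex.ofReal_im _
  · rw [hμ, Complex.ofReal_re, le_div_iff₀ haq]
    exact hlow
  · rw [hμ, Complex.ofReal_re, div_le_iff₀ haq]
    exact hup
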